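/- Suppose the response maps 𝒫 and ℛ satisfy the sensitivity assumption, set ε_p := ε_{p,p} + ε_{r,p}, ε_r := ε_{p,r} + ε_{r,r}, ε := max(ε_p, ε_r), and assume 0 < ε < 1. Fix an occupancy measure d and an initial environment (P₀, r₀), and define the repeated-deployment sequence by P_{t+1} = 𝒫(d, P_t, r_t) and r_{t+1} = ℛ(d, P_t, r_t). Let (P_d, r_d) be a fixed point of this map, i.e. P_d = 𝒫(d, P_d, r_d) and r_d = ℛ(d, P_d, r_d). Assume dist((P₀, r₀), (P₁, r₁)) > 0. Then for every ν > 0 and every natural number k with k ≥ ln(dist((P₀, r₀), (P₁, r₁))/ν) / ln(1/ε), it holds that ‖P_k − P_d‖₂ + ‖r_k − r_d‖₂ ≤ ν/(1 − ε). -/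

import Mathlib

/-- Repeated deployment of a fixed occupancy measure `d`: after
`k ≥ ln(dist((P₀,r₀),(P₁,r₁))/ν) / ln(1/ε)` rounds, the environment is within
`ν/(1-ε)` of the limit environment `(P_d, r_d)`. -/
theorem repeated_deployment_convergence
    {S A : Type*} [Fintype S] [Fintype A] [Nonempty S] [Nonempty A]
    (Pmap : EuclideanSpace ℝ (S × A) → EuclideanSpace ℝ (S × A × S) →
      EuclideanSpace ℝ (S × A) → EuclideanSpace ℝ (S × A × S))
    (Rmap : EuclideanSpace ℝ (S × A) → EuclideanSpace ℝ (S × A × S) →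
      EuclideanSpace ℝ (S × A) → EuclideanSpace ℝ (S × A))
    (ιp ιr εpp εpr εrp εrr : ℝ)
    (hιp : 0 ≤ ιp) (hιr : 0 ≤ ιr) (hεpp : 0 ≤ εpp) (hεpr : 0 ≤ εpr)
    (hεrp : 0 ≤ εrp) (hεrr : 0 ≤ εrr)
    (hsensP : ∀ d P r d' P' r',
      ‖Pmap d P r - Pmap d' P' r'‖ ≤ ιp * ‖d - d'‖ + εpp * ‖P - P'‖ + εpr * ‖r - r'‖)
    (hsensR : ∀ d P r d' P' r',
      ‖Rmap d P r - Rmap d' P' r'‖ ≤ ιr * ‖d - d'‖ + εrp * ‖P - P'‖ + εrr * ‖r - r'‖)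
    (ε : ℝ) (hεdef : ε = max (εpp + εrp) (εpr + εrr))
    (hε0 : 0 < ε) (hε1 : ε < 1)
    (d : EuclideanSpace ℝ (S × A))
    (P : ℕ → EuclideanSpace ℝ (S × A × S)) (r : ℕ → EuclideanSpace ℝ (S × A))
    (hPseq : ∀ t, P (t + 1) = Pmap d (P t) (r t))
    (hrseq : ∀ t, r (t + 1) = Rmap d (P t) (r t))
    (Pd : EuclideanSpace ℝ (S × A × S)) (rd : EuclideanSpace ℝ (S × A))
    (hPdfix : Pd = Pmap d Pd rd) (hrdfix : rd = Rmap d Pd rd)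
    (hpos : 0 < ‖P 0 - P 1‖ + ‖r 0 - r 1‖)
    (ν : ℝ) (hν : 0 < ν) (k : ℕ)
    (hk : (k : ℝ) ≥
      Real.log ((‖P 0 - P 1‖ + ‖r 0 - r 1‖) / ν) / Real.log (1 / ε)) :
    ‖P k - Pd‖ + ‖r k - rd‖ ≤ ν / (1 - ε) := by
  have h1ε : 0 < 1 - ε := by linarith
  have hεa : εpp + εrp ≤ ε := hεdef ▸ le_max_left _ _
  have hεb : εpr + εrr ≤ ε := hεdef ▸ le_max_right _ _
  set C : ℝ := ‖P 0 - P 1‖ + ‖r 0 - r 1‖ with hCdef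
  set D : ℕ → ℝ := fun t => ‖P t - Pd‖ + ‖r t - rd‖ with hDdef
  have hDnn : ∀ t, 0 ≤ D t := fun t =>
    add_nonneg (norm_nonneg _) (norm_nonneg _)
  have hstep : ∀ t, D (t + 1) ≤ ε * D t := by
    intro t
    have h1 := hsensP d (P t) (r t) d Pd rd
    have h2 := hsensR d (P t) (r t) d Pd rd
    rw [sub_self, norm_zero, mul_zero] at h1 h2
    have hnp : (0:ℝ) ≤ ‖P t - Pd‖ := norm_nonneg _
    have hnr : (0:ℝ) ≤ ‖r t - rd‖ := norm_nonneg _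
    have heq : D (t + 1) = ‖Pmap d (P t) (r t) - Pmap d Pd rd‖ +
        ‖Rmap d (P t) (r t) - Rmap d Pd rd‖ := by
      simp only [hDdef, hPseq t, hrseq t, ← hPdfix, ← hrdfix]
    rw [heq]
    have e1 : (ε - (εpp + εrp)) * ‖P t - Pd‖ ≥ 0 :=
      mul_nonneg (by linarith) hnp
    have e2 : (ε - (εpr + εrr)) * ‖r t - rd‖ ≥ 0 :=
      mul_nonneg (by linarith) hnr
    simp only [hDdef]
    nlinarith
  have hiter : ∀ t, D t ≤ ε ^ t * D 0 := by
    intro t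
    induction t with
    | zero => simp
    | succ n ih =>
      calc D (n + 1) ≤ ε * D n := hstep n
        _ ≤ ε * (ε ^ n * D 0) := by
            exact mul_le_mul_of_nonneg_left ih hε0.le
        _ = ε ^ (n + 1) * D 0 := by ring
  have hD0 : D 0 ≤ C / (1 - ε) := by
    have htri : D 0 ≤ C + D 1 := by
      have h1 : ‖P 0 - Pd‖ ≤ ‖P 0 - P 1‖ + ‖P 1 - Pd‖ :=
        norm_sub_le_norm_sub_add_norm_sub _ _ _
      have h2 : ‖r 0 - rd‖ ≤ ‖r 0 - r 1‖ + ‖r 1 - rd‖ :=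
        norm_sub_le_norm_sub_add_norm_sub _ _ _
      simp only [hDdef, hCdef]
      linarith
    have h1 := hstep 0
    rw [le_div_iff₀ h1ε]
    nlinarith
  -- bound ε^k * C ≤ ν
  have hεkC : ε ^ k * C ≤ ν := by
    have hloginv : 0 < Real.log (1 / ε) := by
      apply Real.log_pos
      rw [one_div]
      exact (one_lt_inv₀ hε0).mpr hε1
    have hk' : Real.log (C / ν) ≤ (k : ℝ) * Real.log (1 / ε) :=
      (div_le_iff₀ hloginv).mp hk
    have hCν : 0 < C / ν := div_pos hpos hν
    have hlogpow : Real.log (ε ^ k) ≤ Real.log (ν / C) := by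
      rw [Real.log_pow]
      have h1 : Real.log (1 / ε) = -Real.log ε := by
        rw [one_div, Real.log_inv]
      have h2 : Real.log (ν / C) = -Real.log (C / ν) := by
        rw [← Real.log_inv, inv_div]
      rw [h2]
      rw [h1] at hk'
      linarith
    have hpow : ε ^ k ≤ ν / C := by
      have := Real.exp_le_exp.mpr hlogpow
      rwa [Real.exp_log (pow_pos hε0 k), Real.exp_log (div_pos hν hpos)] at this
    calc ε ^ k * C ≤ (ν / C) * C := by
          exact mul_le_mul_of_nonneg_right hpow hpos.le
      _ = ν := by field_simp
  have : D k ≤ ν / (1 - ε) := by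
    calc D k ≤ ε ^ k * D 0 := hiter k
      _ ≤ ε ^ k * (C / (1 - ε)) :=
          mul_le_mul_of_nonneg_left hD0 (pow_nonneg hε0.le k)
      _ = (ε ^ k * C) / (1 - ε) := by ring
      _ ≤ ν / (1 - ε) := by gcongr
  exact this
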